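/- Assume the center K := Z(H) of H is a field and that t does not fix K pointwise, and let K^+ := {a ∈ K : t(a) = a}. Then K is a quadratic extension of K^+ ([K : K^+] = 2), and for every ring homomorphism σ₀ : K^+ → ℝ the ℝ-algebra K ⊗_{K^+} ℝ (formed via σ₀) is isomorphic to ℂ; equivalently, every ℚ-algebra homomorphism φ : K → ℂ has image not contained in ℝ and satisfies φ(t(a)) = conjugate of φ(a) for all a ∈ K. -/

import Mathlib

open scoped TensorProduct

noncomputable section

/-- Complex conjugation on `ℂ` as a `ℚ`-algebra homomorphism. -/
def conjQAlg : ℂ →ₐ[ℚ] ℂ := (Complex.conjAe.restrictScalars ℚ).toAlgHom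

variable (H : Type) [Ring H] [Algebra ℚ H] [FiniteDimensional ℚ H]

/-- The conjugate-linear involution of `H_ℂ = ℂ ⊗[ℚ] H` fixing `H`. -/
def sigmaC : ℂ ⊗[ℚ] H →ₗ[ℚ] ℂ ⊗[ℚ] H :=
  (Algebra.TensorProduct.map conjQAlg (AlgHom.id ℚ H)).toLinearMap

/-- The inclusion of `H` into `H_ℂ = ℂ ⊗[ℚ] H`. -/
def inclH : H →ₐ[ℚ] ℂ ⊗[ℚ] H := Algebra.TensorProduct.includeRight

/-- The data of a polarized weight 2 Hodge structure on a finite-dimensional `ℚ`-algebra `H`,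
compatible with the ring structure:
(i) a Hodge decomposition `H_ℂ = H^{2,0} ⊕ H^{1,1} ⊕ H^{0,2}` with `σ(H^{2,0}) = H^{0,2}`,
`σ(H^{1,1}) = H^{1,1}`;
(ii) a polarization: a symmetric `ℚ`-bilinear form `B` on `H` with `ℂ`-bilinear extension `BC`
to `H_ℂ`, whose associated Hermitian pairing `h(α,β) := BC α (σ β)` makes the Hodge pieces
pairwise orthogonal and is positive definite on `H^{2,0}`, `H^{0,2}` and negative definite on
`H^{1,1}`;
(iii) the product is a morphism of Hodge structures of bidegree `(-1,-1)`:
`H^{p,q}·H^{p',q'} ⊆ H^{p+p'-1,q+q'-1}`;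
(iv) an adjunction `t`: a `ℚ`-linear involution with `t(ab) = t(b)t(a)`,
`⟨ab,c⟩ = ⟨b, t(a)c⟩` and `⟨ab,c⟩ = ⟨a, c·t(b)⟩`. -/
structure HodgeAlgebraData where
  H20 : Submodule ℂ (ℂ ⊗[ℚ] H)
  H11 : Submodule ℂ (ℂ ⊗[ℚ] H)
  H02 : Submodule ℂ (ℂ ⊗[ℚ] H)
  sup_top : H20 ⊔ H11 ⊔ H02 = ⊤
  disj1 : H20 ⊓ (H11 ⊔ H02) = ⊥
  disj2 : H11 ⊓ H02 = ⊥
  sigma_20 : ∀ x ∈ H20, sigmaC H x ∈ H02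
  sigma_02 : ∀ x ∈ H02, sigmaC H x ∈ H20
  sigma_11 : ∀ x ∈ H11, sigmaC H x ∈ H11
  B : H →ₗ[ℚ] H →ₗ[ℚ] ℚ
  B_symm : ∀ a b : H, B a b = B b a
  BC : (ℂ ⊗[ℚ] H) →ₗ[ℂ] (ℂ ⊗[ℚ] H) →ₗ[ℂ] ℂ
  BC_extends : ∀ a b : H, BC (inclH H a) (inclH H b) = (B a b : ℂ)
  BC_symm : ∀ x y, BC x y = BC y x
  BC_conj : ∀ x y, BC (sigmaC H x) (sigmaC H y) = starRingEnd ℂ (BC x y)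
  orth_20_11 : ∀ x ∈ H20, ∀ y ∈ H11, BC x (sigmaC H y) = 0
  orth_20_02 : ∀ x ∈ H20, ∀ y ∈ H02, BC x (sigmaC H y) = 0
  orth_11_02 : ∀ x ∈ H11, ∀ y ∈ H02, BC x (sigmaC H y) = 0
  pos_20 : ∀ x ∈ H20, x ≠ 0 → 0 < (BC x (sigmaC H x)).re ∧ (BC x (sigmaC H x)).im = 0
  pos_02 : ∀ x ∈ H02, x ≠ 0 → 0 < (BC x (sigmaC H x)).re ∧ (BC x (sigmaC H x)).im = 0
  neg_11 : ∀ x ∈ H11, x ≠ 0 → (BC x (sigmaC H x)).re < 0 ∧ (BC x (sigmaC H x)).im = 0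
  mul_20_20 : ∀ x ∈ H20, ∀ y ∈ H20, x * y = 0
  mul_20_11 : ∀ x ∈ H20, ∀ y ∈ H11, x * y ∈ H20
  mul_11_20 : ∀ x ∈ H11, ∀ y ∈ H20, x * y ∈ H20
  mul_11_11 : ∀ x ∈ H11, ∀ y ∈ H11, x * y ∈ H11
  mul_20_02 : ∀ x ∈ H20, ∀ y ∈ H02, x * y ∈ H11
  mul_02_20 : ∀ x ∈ H02, ∀ y ∈ H20, x * y ∈ H11
  mul_02_02 : ∀ x ∈ H02, ∀ y ∈ H02, x * y = 0
  mul_11_02 : ∀ x ∈ H11, ∀ y ∈ H02, x * y ∈ H02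
  mul_02_11 : ∀ x ∈ H02, ∀ y ∈ H11, x * y ∈ H02
  t : H →ₗ[ℚ] H
  t_invol : ∀ a : H, t (t a) = a
  t_mul : ∀ a b : H, t (a * b) = t b * t a
  adj_left : ∀ a b c : H, B (a * b) c = B b (t a * c)
  adj_right : ∀ a b c : H, B (a * b) c = B a (c * t b)

variable {H}

/-- `W := H^{2,0}·H_ℂ`, the `ℂ`-linear span of all products `x·y` with `x ∈ H^{2,0}`,
`y ∈ H_ℂ`. -/
def HodgeAlgebraData.W (D : HodgeAlgebraData H) : Submodule ℂ (ℂ ⊗[ℚ] H) := D.H20 * ⊤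

/-- `σ(W)`, the image of `W` under the conjugation `σ`, as a `ℚ`-subspace of `H_ℂ`. -/
def HodgeAlgebraData.sigmaW (D : HodgeAlgebraData H) : Submodule ℚ (ℂ ⊗[ℚ] H) :=
  (D.W.restrictScalars ℚ).map (sigmaC H)

/-- The `ℂ`-linear extension of `t` to `H_ℂ`. -/
def HodgeAlgebraData.tC (D : HodgeAlgebraData H) : ℂ ⊗[ℚ] H →ₗ[ℂ] ℂ ⊗[ℚ] H :=
  LinearMap.baseChange ℂ D.t


/-! ### Auxiliary lemmas -/

section Aux

set_option linter.unusedSectionVars false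

variable {H : Type} [Ring H] [Algebra ℚ H] [FiniteDimensional ℚ H]

lemma sigmaC_mul (x y : ℂ ⊗[ℚ] H) : sigmaC H (x * y) = sigmaC H x * sigmaC H y :=
  map_mul (Algebra.TensorProduct.map conjQAlg (AlgHom.id ℚ H)) x y

lemma sigmaC_tmul (c : ℂ) (a : H) : sigmaC H (c ⊗ₜ[ℚ] a) = (starRingEnd ℂ c) ⊗ₜ[ℚ] a := rfl

lemma algMap_tmul (c : ℂ) : (algebraMap ℂ (ℂ ⊗[ℚ] H)) c = c ⊗ₜ[ℚ] (1:H) := by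
  rw [Algebra.TensorProduct.algebraMap_apply]; rfl

lemma sigmaC_smul (c : ℂ) (x : ℂ ⊗[ℚ] H) :
    sigmaC H (c • x) = (starRingEnd ℂ c) • sigmaC H x := by
  rw [Algebra.smul_def, sigmaC_mul, Algebra.smul_def]
  congr 1

lemma sigmaC_inclH (a : H) : sigmaC H (inclH H a) = inclH H a := by
  show sigmaC H ((1:ℂ) ⊗ₜ[ℚ] a) = _
  rw [sigmaC_tmul, map_one]; rfl

lemma tmul_eq_smul (c : ℂ) (a : H) : (c ⊗ₜ[ℚ] a : ℂ ⊗[ℚ] H) = c • inclH H a := by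
  show _ = c • ((1:ℂ) ⊗ₜ[ℚ] a)
  rw [TensorProduct.smul_tmul', smul_eq_mul, mul_one]

lemma inclH_central {a : H} (hcen : ∀ g : H, g * a = a * g) (x : ℂ ⊗[ℚ] H) :
    inclH H a * x = x * inclH H a := by
  show ((1:ℂ) ⊗ₜ[ℚ] a) * x = x * ((1:ℂ) ⊗ₜ[ℚ] a)
  induction x using TensorProduct.induction_on with
  | zero => simp
  | tmul c h => rw [Algebra.TensorProduct.tmul_mul_tmul, Algebra.TensorProduct.tmul_mul_tmul,
      one_mul, mul_one, hcen h]
  | add u v hu hv => rw [mul_add, add_mul, hu, hv]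

namespace HodgeAlgebraData

variable (D : HodgeAlgebraData H)

lemma t_mem_center {a : H} (ha : a ∈ Subring.center H) : D.t a ∈ Subring.center H := by
  rw [Subring.mem_center_iff] at ha ⊢
  intro g
  conv_lhs => rw [← D.t_invol g]
  rw [← D.t_mul, ← ha (D.t g), D.t_mul, D.t_invol]

lemma t_one : D.t 1 = 1 := by
  have h : ∀ b : H, D.t 1 * b = b := by
    intro b
    conv_lhs => rw [← D.t_invol b]
    rw [← D.t_mul, mul_one, D.t_invol]
  have := h 1
  rwa [mul_one] at this

lemma tC_inclH (a : H) : D.tC (inclH H a) = inclH H (D.t a) := by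
  show D.tC ((1:ℂ) ⊗ₜ[ℚ] a) = (1:ℂ) ⊗ₜ[ℚ] D.t a
  simp [HodgeAlgebraData.tC]

lemma BC_tmul (c c' : ℂ) (a b : H) :
    D.BC (c ⊗ₜ[ℚ] a) (c' ⊗ₜ[ℚ] b) = c * c' * (D.B a b : ℂ) := by
  simp only [tmul_eq_smul, map_smul, LinearMap.smul_apply, smul_eq_mul]
  rw [D.BC_extends]
  ring

lemma adjC (x y z : ℂ ⊗[ℚ] H) : D.BC (x * y) z = D.BC y (D.tC x * z) := by
  induction x using TensorProduct.induction_on with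
  | zero => simp
  | add x1 x2 h1 h2 => rw [add_mul, map_add, LinearMap.add_apply, map_add, add_mul, map_add, h1, h2]
  | tmul cx ax =>
    induction y using TensorProduct.induction_on with
    | zero => simp
    | add y1 y2 h1 h2 => rw [mul_add, map_add, LinearMap.add_apply, map_add,
        LinearMap.add_apply, h1, h2]
    | tmul cy ay =>
      induction z using TensorProduct.induction_on with
      | zero => simp
      | add z1 z2 h1 h2 => rw [map_add, mul_add, map_add, h1, h2]
      | tmul cz az =>
        have htc : D.tC (cx ⊗ₜ[ℚ] ax) = cx ⊗ₜ[ℚ] D.t ax := by simp [HodgeAlgebraData.tC]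
        rw [Algebra.TensorProduct.tmul_mul_tmul, htc, Algebra.TensorProduct.tmul_mul_tmul,
          D.BC_tmul, D.BC_tmul,
          show (D.B (ax * ay) az : ℚ) = D.B ay (D.t ax * az) from D.adj_left ax ay az]
        ring

lemma exists_decomp (x : ℂ ⊗[ℚ] H) :
    ∃ a ∈ D.H20, ∃ b ∈ D.H11, ∃ c ∈ D.H02, x = a + b + c := by
  have hx : x ∈ D.H20 ⊔ D.H11 ⊔ D.H02 := by rw [D.sup_top]; trivial
  rw [Submodule.mem_sup] at hx
  obtain ⟨y, hy, c, hc, hyc⟩ := hx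
  rw [Submodule.mem_sup] at hy
  obtain ⟨a, ha, b, hb, hab⟩ := hy
  exact ⟨a, ha, b, hb, c, hc, by rw [← hyc, ← hab]⟩

lemma decomp_zero {a b c : ℂ ⊗[ℚ] H} (ha : a ∈ D.H20) (hb : b ∈ D.H11) (hc : c ∈ D.H02)
    (h : a + b + c = 0) : a = 0 ∧ b = 0 ∧ c = 0 := by
  have hbc : b + c ∈ D.H11 ⊔ D.H02 :=
    Submodule.add_mem _ (Submodule.mem_sup_left hb) (Submodule.mem_sup_right hc)
  have ha' : a ∈ D.H20 ⊓ (D.H11 ⊔ D.H02) := by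
    refine Submodule.mem_inf.mpr ⟨ha, ?_⟩
    have h' : a + (b + c) = 0 := by rw [← add_assoc]; exact h
    have : a = -(b + c) := eq_neg_of_add_eq_zero_left h'
    rw [this]
    exact Submodule.neg_mem _ hbc
  rw [D.disj1] at ha'
  have ha0 : a = 0 := Submodule.mem_bot ℂ |>.mp ha'
  have hbc0 : b + c = 0 := by rw [ha0, zero_add] at h; exact h
  have hb' : b ∈ D.H11 ⊓ D.H02 := by
    refine Submodule.mem_inf.mpr ⟨hb, ?_⟩
    have : b = -c := eq_neg_of_add_eq_zero_left hbc0
    rw [this]; exact Submodule.neg_mem _ hc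
  rw [D.disj2] at hb'
  have hb0 : b = 0 := Submodule.mem_bot ℂ |>.mp hb'
  refine ⟨ha0, hb0, ?_⟩
  rw [ha0, hb0, zero_add, zero_add] at h
  exact h

lemma decomp_eq {a b c a' b' c' : ℂ ⊗[ℚ] H} (ha : a ∈ D.H20) (hb : b ∈ D.H11) (hc : c ∈ D.H02)
    (ha' : a' ∈ D.H20) (hb' : b' ∈ D.H11) (hc' : c' ∈ D.H02)
    (h : a + b + c = a' + b' + c') : a = a' ∧ b = b' ∧ c = c' := by
  have key : (a - a') + (b - b') + (c - c') = 0 := by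
    have : (a - a') + (b - b') + (c - c') = (a + b + c) - (a' + b' + c') := by abel
    rw [this, h, sub_self]
  have := D.decomp_zero (Submodule.sub_mem _ ha ha') (Submodule.sub_mem _ hb hb')
    (Submodule.sub_mem _ hc hc') key
  exact ⟨sub_eq_zero.mp this.1, sub_eq_zero.mp this.2.1, sub_eq_zero.mp this.2.2⟩

lemma central_idem_mem_H11 {e : ℂ ⊗[ℚ] H} (hcom : ∀ x, e * x = x * e) (hi : e * e = e) :
    e ∈ D.H11 := by
  obtain ⟨a, ha, b, hb, c, hcm, he⟩ := D.exists_decomp e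
  have comm11 : ∀ x, x ∈ D.H11 → a * x = x * a ∧ b * x = x * b ∧ c * x = x * c := by
    intro x hx
    have h0 : a * x + b * x + c * x = x * a + x * b + x * c := by
      have h := hcom x
      rw [he, add_mul, add_mul, mul_add, mul_add] at h
      exact h
    exact D.decomp_eq (D.mul_20_11 a ha x hx) (D.mul_11_11 b hb x hx) (D.mul_02_11 c hcm x hx)
      (D.mul_11_20 x hx a ha) (D.mul_11_11 x hx b hb) (D.mul_11_02 x hx c hcm) h0
  have comm02 : ∀ x, x ∈ D.H02 → a * x = x * a := by
    intro x hx
    have h0 : (0:ℂ ⊗[ℚ] H) + a * x + b * x = 0 + x * a + x * b := by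
      have h := hcom x
      rw [he, add_mul, add_mul, mul_add, mul_add, D.mul_02_02 c hcm x hx,
        D.mul_02_02 x hx c hcm, add_zero, add_zero] at h
      rw [zero_add, zero_add]
      exact h
    exact (D.decomp_eq (Submodule.zero_mem _) (D.mul_20_02 a ha x hx) (D.mul_11_02 b hb x hx)
      (Submodule.zero_mem _) (D.mul_02_20 x hx a ha) (D.mul_02_11 x hx b hb) h0).2.1
  have hab : a * b = b * a := (comm11 b hb).1
  have hcb : c * b = b * c := (comm11 b hb).2.2
  have hac : a * c = c * a := comm02 c hcm
  have haa : a * a = 0 := D.mul_20_20 a ha a ha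
  have hcc : c * c = 0 := D.mul_02_02 c hcm c hcm
  have hexp : (a * b + b * a) + (b * b + (a * c + c * a)) + (b * c + c * b) = a + b + c := by
    have h := hi
    rw [he] at h
    calc (a * b + b * a) + (b * b + (a * c + c * a)) + (b * c + c * b)
        = (a + b + c) * (a + b + c) := by
          simp only [add_mul, mul_add]
          rw [haa, hcc]
          abel
      _ = a + b + c := h
  have hmem20 : a * b + b * a ∈ D.H20 :=
    Submodule.add_mem _ (D.mul_20_11 a ha b hb) (D.mul_11_20 b hb a ha)
  have hmem11 : b * b + (a * c + c * a) ∈ D.H11 :=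
    Submodule.add_mem _ (D.mul_11_11 b hb b hb)
      (Submodule.add_mem _ (D.mul_20_02 a ha c hcm) (D.mul_02_20 c hcm a ha))
  have hmem02 : b * c + c * b ∈ D.H02 :=
    Submodule.add_mem _ (D.mul_11_02 b hb c hcm) (D.mul_02_11 c hcm b hb)
  obtain ⟨E1, E2, E3⟩ := D.decomp_eq hmem20 hmem11 hmem02 ha hb hcm hexp
  rw [← hab] at E1
  have E1' : a = a * b + a * b := E1.symm
  have k1 : a * b = a * (b * b) := by
    have k := congrArg (fun z => a * z) E2.symm
    rw [mul_add, mul_add, ← hac,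
      show a * (a * c) = 0 from by rw [← mul_assoc, haa, zero_mul],
      add_zero, add_zero] at k
    exact k
  have k2 : a * b = a * (b * b) + a * (b * b) := by
    have k := congrArg (fun z => z * b) E1'
    simp only [add_mul, mul_assoc] at k
    exact k
  have habb0 : a * (b * b) = 0 := left_eq_add.mp (k1.symm.trans k2)
  have hab0 : a * b = 0 := k1.trans habb0
  have ha0 : a = 0 := by rw [hab0, add_zero] at E1'; exact E1'
  have hbb : b * b = b := by
    rw [ha0, zero_mul, mul_zero, zero_add, add_zero] at E2
    exact E2
  rw [hcb] at E3
  have E3' : c = b * c + b * c := E3.symm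
  have hbc0 : b * c = 0 := by
    have h1 := congrArg (fun z => b * z) E3'
    rw [mul_add, ← mul_assoc, hbb] at h1
    exact left_eq_add.mp h1
  have hc0 : c = 0 := by rw [E3', hbc0, add_zero]
  rw [he, ha0, hc0, zero_add, add_zero]
  exact hb

lemma smul_mem_center (q : ℚ) {z : H} (hz : z ∈ Subring.center H) :
    q • z ∈ Subring.center H := by
  rw [Subring.mem_center_iff] at hz ⊢
  intro g
  rw [mul_smul_comm, smul_mul_assoc, hz g]

lemma quadratic_part (hK : IsField (Subring.center H))
    (hnf : ∃ a ∈ Subring.center H, D.t a ≠ a) :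
    ∃ x ∈ Subring.center H, D.t x ≠ x ∧
      ∀ a ∈ Subring.center H, ∃ b c : H,
        (b ∈ Subring.center H ∧ D.t b = b) ∧ (c ∈ Subring.center H ∧ D.t c = c) ∧
        a = b + c * x := by
  obtain ⟨a₀, ha₀c, ha₀⟩ := hnf
  set x := a₀ - D.t a₀ with hxdef
  have hxc : x ∈ Subring.center H := Subring.sub_mem _ ha₀c (D.t_mem_center ha₀c)
  have htx : D.t x = -x := by
    rw [hxdef, map_sub, D.t_invol, neg_sub]
  have hx0 : x ≠ 0 := sub_ne_zero.mpr (Ne.symm ha₀)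
  have htxne : D.t x ≠ x := by
    rw [htx]
    intro hcon
    apply hx0
    have h2 : (2:ℚ) • x = 0 := by
      rw [two_smul]
      nth_rewrite 1 [← hcon]
      exact neg_add_cancel x
    have := smul_eq_zero.mp h2
    rcases this with h | h
    · norm_num at h
    · exact h
  have hx0' : (⟨x, hxc⟩ : Subring.center H) ≠ 0 := by
    intro hcon
    exact hx0 (congrArg Subtype.val hcon)
  obtain ⟨Y, hY⟩ := hK.mul_inv_cancel hx0'
  have hyc : (Y : H) ∈ Subring.center H := Y.2
  have hxy : x * (Y : H) = 1 := congrArg Subtype.val hY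
  have hty : D.t (Y : H) = -(Y : H) := by
    have h1 : D.t (Y : H) * D.t x = 1 := by rw [← D.t_mul, hxy, D.t_one]
    rw [htx, mul_neg] at h1
    have h2 : D.t (Y : H) * x = -1 := by
      rw [← neg_neg (D.t (Y:H) * x), h1]
    calc D.t (Y : H) = D.t (Y : H) * (x * (Y : H)) := by rw [hxy, mul_one]
      _ = (D.t (Y : H) * x) * (Y : H) := (mul_assoc _ _ _).symm
      _ = -1 * (Y : H) := by rw [h2]
      _ = -(Y : H) := neg_one_mul _
  refine ⟨x, hxc, htxne, ?_⟩
  intro a hac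
  set b := (2:ℚ)⁻¹ • (a + D.t a) with hbdef
  set d := (2:ℚ)⁻¹ • (a - D.t a) with hddef
  have hbc : b ∈ Subring.center H :=
    smul_mem_center _ (Subring.add_mem _ hac (D.t_mem_center hac))
  have hdc : d ∈ Subring.center H :=
    smul_mem_center _ (Subring.sub_mem _ hac (D.t_mem_center hac))
  have htb : D.t b = b := by
    rw [hbdef, map_smul, map_add, D.t_invol, add_comm]
  have htd : D.t d = -d := by
    rw [hddef, map_smul, map_sub, D.t_invol, ← smul_neg, neg_sub]
  set c := d * (Y : H) with hcdef
  have hcc : c ∈ Subring.center H := Subring.mul_mem _ hdc hyc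
  have htc : D.t c = c := by
    rw [hcdef, D.t_mul, hty, htd, neg_mul_neg]
    exact (Subring.mem_center_iff.mp hdc (Y : H))
  refine ⟨b, c, ⟨hbc, htb⟩, ⟨hcc, htc⟩, ?_⟩
  have hyx : (Y : H) * x = 1 := by
    rw [← Subring.mem_center_iff.mp hyc x]
    exact hxy
  have hcx : c * x = d := by
    rw [hcdef, mul_assoc, hyx, mul_one]
  rw [hcx, hbdef, hddef, ← smul_add,
    show (a + D.t a) + (a - D.t a) = (2:ℚ) • a from by rw [two_smul]; abel,
    smul_smul]
  norm_num


set_option maxHeartbeats 2000000 in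
set_option synthInstance.maxHeartbeats 1000000 in
lemma conj_key (hK : IsField (Subring.center H)) (φ : Subring.center H →+* ℂ) :
    ∀ (a : Subring.center H) (hta : D.t (a : H) ∈ Subring.center H),
      φ ⟨D.t (a : H), hta⟩ = starRingEnd ℂ (φ a) := by
  letI : Field ↥(Subalgebra.center ℚ H) := (show IsField ↥(Subalgebra.center ℚ H) from hK).toField
  -- primitive element
  obtain ⟨θ, hθtop⟩ := Field.exists_primitive_element ℚ ↥(Subalgebra.center ℚ H)
  have hint : IsIntegral ℚ θ := Algebra.IsIntegral.isIntegral θ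
  have hadj : Algebra.adjoin ℚ {θ} = ⊤ := by
    have h := IntermediateField.adjoin_simple_toSubalgebra_of_isAlgebraic hint.isAlgebraic
    rw [hθtop, IntermediateField.top_toSubalgebra] at h
    exact h.symm
  have hrep : ∀ a : ↥(Subalgebra.center ℚ H), ∃ r : Polynomial ℚ, Polynomial.aeval θ r = a := by
    intro a
    have : a ∈ Algebra.adjoin ℚ {θ} := by rw [hadj]; exact Algebra.mem_top
    rwa [Algebra.adjoin_singleton_eq_range_aeval, AlgHom.mem_range] at this
  set φ' : ↥(Subalgebra.center ℚ H) →ₐ[ℚ] ℂ :=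
    (show ↥(Subalgebra.center ℚ H) →+* ℂ from φ).toRatAlgHom with hφ'def
  set p : Polynomial ℚ := minpoly ℚ θ with hpdef
  have hsep : p.Separable := Algebra.IsSeparable.isSeparable ℚ θ
  set l : ℂ := φ' θ with hldef
  set P : Polynomial ℂ := p.map (algebraMap ℚ ℂ) with hPdef
  have hsq : Squarefree P := hsep.map.squarefree
  have hPl : P.eval l = 0 := by
    have h1 : Polynomial.aeval l p = 0 := by
      have h2 : Polynomial.aeval (φ' θ) p = φ' (Polynomial.aeval θ p) :=
        Polynomial.aeval_algHom_apply φ' θ p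
      rw [minpoly.aeval, map_zero] at h2
      exact h2
    rwa [Polynomial.aeval_def, ← Polynomial.eval_map] at h1
  obtain ⟨q, hq⟩ := Polynomial.dvd_iff_isRoot.mpr hPl
  set c₀ : ℂ := q.eval l with hc₀def
  have hc₀ : c₀ ≠ 0 := by
    intro h0
    obtain ⟨u, hu⟩ := Polynomial.dvd_iff_isRoot.mpr h0
    have : IsUnit (Polynomial.X - Polynomial.C l) :=
      hsq _ ⟨u, by rw [hq, hu]; ring⟩
    exact Polynomial.not_isUnit_X_sub_C _ this
  -- the idempotent upstairs
  set θt : ℂ ⊗[ℚ] ↥(Subalgebra.center ℚ H) :=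
    Algebra.TensorProduct.includeRight θ with hθtdef
  have haevP : Polynomial.aeval θt P = 0 := by
    rw [hPdef, Polynomial.aeval_map_algebraMap, hθtdef,
      Polynomial.aeval_algHom_apply, minpoly.aeval, map_zero]
  set E0 := Polynomial.aeval θt q with hE0def
  have hq2 : E0 * E0 = c₀ • E0 := by
    obtain ⟨w, hw⟩ := Polynomial.X_sub_C_dvd_sub_C_eval (a := l) (p := q)
    have hpoly : q * q = P * w + Polynomial.C c₀ * q := by
      rw [hq]
      linear_combination q * hw
    calc E0 * E0 = Polynomial.aeval θt (q * q) := (map_mul _ _ _).symm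
      _ = Polynomial.aeval θt (P * w + Polynomial.C c₀ * q) := by rw [hpoly]
      _ = c₀ • E0 := by
          rw [map_add, map_mul, haevP, zero_mul, zero_add, map_mul, Polynomial.aeval_C,
            ← Algebra.smul_def]
  have hθE : θt * E0 = l • E0 := by
    have hpoly : Polynomial.X * q = P + Polynomial.C l * q := by rw [hq]; ring
    have h := congrArg (Polynomial.aeval θt) hpoly
    rwa [map_mul, Polynomial.aeval_X, map_add, haevP, zero_add, map_mul, Polynomial.aeval_C,
      ← Algebra.smul_def] at h
  set Φ : (ℂ ⊗[ℚ] ↥(Subalgebra.center ℚ H)) →ₐ[ℂ] ℂ :=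
    Algebra.TensorProduct.lift (AlgHom.id ℂ ℂ) φ' (fun _ _ => Commute.all _ _) with hΦdef
  have hΦθ : Φ θt = l := by
    rw [hθtdef]
    show Φ ((1:ℂ) ⊗ₜ[ℚ] θ) = l
    rw [hΦdef, Algebra.TensorProduct.lift_tmul]
    simp [hldef]
  have hΦE : Φ E0 = c₀ := by
    have h : Φ E0 = Polynomial.aeval (Φ θt) q := (Polynomial.aeval_algHom_apply Φ θt q).symm
    rw [hΦθ] at h
    rw [h, hc₀def]
    simp [Polynomial.aeval_def]
  have hE0 : E0 ≠ 0 := fun h => hc₀ (by rw [← hΦE, h, map_zero])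
  -- push down to ℂ ⊗ H
  set jm : (ℂ ⊗[ℚ] ↥(Subalgebra.center ℚ H)) →ₐ[ℂ] ℂ ⊗[ℚ] H :=
    Algebra.TensorProduct.map (AlgHom.id ℂ ℂ) (Subalgebra.val _) with hjmdef
  have hjinj : Function.Injective jm := by
    obtain ⟨g, hg⟩ :=
      ((Subalgebra.val (Subalgebra.center ℚ H)).toLinearMap).exists_leftInverse_of_injective
        (by rw [LinearMap.ker_eq_bot]; exact Subtype.val_injective)
    have hcomp : ∀ zz, LinearMap.lTensor ℂ g (jm zz) = zz := by
      intro zz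
      induction zz using TensorProduct.induction_on with
      | zero => simp
      | tmul cc aa =>
          rw [hjmdef]
          show LinearMap.lTensor ℂ g
            (Algebra.TensorProduct.map (AlgHom.id ℂ ℂ) (Subalgebra.val _) (cc ⊗ₜ[ℚ] aa))
              = cc ⊗ₜ[ℚ] aa
          rw [Algebra.TensorProduct.map_tmul, LinearMap.lTensor_tmul]
          congr 1
          exact DFunLike.congr_fun hg aa
      | add u v hu hv => rw [map_add, map_add, hu, hv]
    intro u v huv
    rw [← hcomp u, ← hcomp v, huv]
  set e₀ := jm E0 with he₀def
  set θhat := inclH H (θ : H) with hθhatdef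
  have hjθ : jm θt = θhat := by
    rw [hjmdef, hθtdef]
    show Algebra.TensorProduct.map (AlgHom.id ℂ ℂ) (Subalgebra.val _) ((1:ℂ) ⊗ₜ[ℚ] θ)
      = (1:ℂ) ⊗ₜ[ℚ] (θ : H)
    rw [Algebra.TensorProduct.map_tmul]
    rfl
  have he₀ : e₀ ≠ 0 := fun h => hE0 (hjinj (by rw [map_zero]; exact h))
  have hidem₀ : e₀ * e₀ = c₀ • e₀ := by rw [he₀def, ← map_mul, hq2, map_smul]
  have hθe₀ : θhat * e₀ = l • e₀ := by rw [← hjθ, he₀def, ← map_mul, hθE, map_smul]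
  obtain ⟨e, hedef⟩ : ∃ e' : ℂ ⊗[ℚ] H, e' = c₀⁻¹ • e₀ := ⟨_, rfl⟩
  have hene : e ≠ 0 := by rw [hedef]; exact smul_ne_zero (inv_ne_zero hc₀) he₀
  have hee : e * e = e := by
    rw [hedef, smul_mul_assoc, mul_smul_comm, hidem₀, smul_smul, smul_smul]
    congr 1
    field_simp
  have hθe : θhat * e = l • e := by
    rw [hedef, mul_smul_comm, hθe₀, smul_comm]
  -- centrality of e
  have hθcomm : ∀ g : H, g * (θ : H) = (θ : H) * g := fun g =>
    Subalgebra.mem_center_iff.mp θ.2 g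
  have hθhatc : ∀ x, θhat * x = x * θhat := fun x => inclH_central hθcomm x
  have hpowc : ∀ (n : ℕ) x, θhat ^ n * x = x * θhat ^ n := by
    intro n
    induction n with
    | zero => intro x; simp
    | succ n ih =>
        intro x
        rw [pow_succ, mul_assoc, hθhatc, ← mul_assoc, ih, mul_assoc]
  have haevc : ∀ (r : Polynomial ℂ) x,
      Polynomial.aeval θhat r * x = x * Polynomial.aeval θhat r := by
    intro r
    induction r using Polynomial.induction_on' with
    | add u v hu hv => intro x; rw [map_add, add_mul, mul_add, hu, hv]
    | monomial n cc =>
        intro x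
        rw [Polynomial.aeval_monomial, mul_assoc, hpowc n x, ← mul_assoc,
          Algebra.commutes, mul_assoc]
  have hform : e = c₀⁻¹ • Polynomial.aeval θhat q := by
    rw [hedef, he₀def, hE0def]
    congr 1
    rw [← hjθ]
    exact (Polynomial.aeval_algHom_apply jm θt q).symm
  have hecent : ∀ x, e * x = x * e := by
    intro x
    rw [hform, smul_mul_assoc, haevc q x, mul_smul_comm]
  have heH11 : e ∈ D.H11 := D.central_idem_mem_H11 hecent hee
  -- eigenvector property
  have hpowe : ∀ n : ℕ, θhat ^ n * e = (l ^ n) • e := by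
    intro n
    induction n with
    | zero => simp
    | succ n ih =>
        rw [pow_succ, mul_assoc, hθe, mul_smul_comm, ih, smul_smul, ← pow_succ']
  have hpolyeig : ∀ r : Polynomial ℚ,
      Polynomial.aeval θhat r * e = ((Polynomial.aeval l r : ℂ)) • e := by
    intro r
    induction r using Polynomial.induction_on' with
    | add u v hu hv => rw [map_add, add_mul, hu, hv, map_add, add_smul]
    | monomial n cc =>
        rw [Polynomial.aeval_monomial, Polynomial.aeval_monomial, mul_assoc, hpowe n,
          mul_smul_comm, ← Algebra.smul_def, mul_smul, algebraMap_smul]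
        exact smul_comm _ _ _
  have heig : ∀ a : ↥(Subalgebra.center ℚ H), inclH H (a : H) * e = φ' a • e := by
    intro a
    obtain ⟨r, hr⟩ := hrep a
    have h1 : inclH H (a : H) = Polynomial.aeval θhat r := by
      rw [← hr]
      have h2 : ((Polynomial.aeval θ r : ↥(Subalgebra.center ℚ H)) : H)
          = Polynomial.aeval ((θ : H)) r := by
        exact (Polynomial.aeval_algHom_apply (Subalgebra.val _) θ r).symm
      rw [h2, hθhatdef]
      exact (Polynomial.aeval_algHom_apply (inclH H) ((θ : H)) r).symm
    have h2 : φ' a = Polynomial.aeval l r := by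
      rw [← hr, hldef]
      exact (Polynomial.aeval_algHom_apply φ' θ r).symm
    rw [h1, h2]
    exact hpolyeig r
  -- nondegeneracy on e
  have hBCne : D.BC e (sigmaC H e) ≠ 0 := by
    obtain ⟨hre, _⟩ := D.neg_11 e heH11 hene
    intro h0
    rw [h0] at hre
    simp at hre
  -- final computation
  intro a hta
  have haZ : (a : H) ∈ Subalgebra.center ℚ H := a.2
  have htaZ : D.t (a : H) ∈ Subalgebra.center ℚ H := hta
  have hmain : φ' ⟨(a : H), haZ⟩ * D.BC e (sigmaC H e)
      = (starRingEnd ℂ) (φ' ⟨D.t (a : H), htaZ⟩) * D.BC e (sigmaC H e) := by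
    calc φ' ⟨(a : H), haZ⟩ * D.BC e (sigmaC H e)
        = D.BC (inclH H (a : H) * e) (sigmaC H e) := by
          rw [heig ⟨(a : H), haZ⟩, map_smul, LinearMap.smul_apply, smul_eq_mul]
      _ = D.BC e (D.tC (inclH H (a : H)) * sigmaC H e) := D.adjC _ _ _
      _ = D.BC e (inclH H (D.t (a : H)) * sigmaC H e) := by rw [D.tC_inclH]
      _ = D.BC e (sigmaC H (inclH H (D.t (a : H)) * e)) := by
          rw [sigmaC_mul, sigmaC_inclH]
      _ = D.BC e (sigmaC H ((φ' ⟨D.t (a : H), htaZ⟩) • e)) := by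
          rw [show inclH H (D.t (a : H)) * e = φ' ⟨D.t (a : H), htaZ⟩ • e from
            heig ⟨D.t (a : H), htaZ⟩]
      _ = (starRingEnd ℂ) (φ' ⟨D.t (a : H), htaZ⟩) * D.BC e (sigmaC H e) := by
          rw [sigmaC_smul, map_smul, smul_eq_mul]
  have hfin : φ' ⟨(a : H), haZ⟩ = (starRingEnd ℂ) (φ' ⟨D.t (a : H), htaZ⟩) :=
    mul_right_cancel₀ hBCne hmain
  have : (starRingEnd ℂ) (φ' ⟨(a : H), haZ⟩) = φ' ⟨D.t (a : H), htaZ⟩ := by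
    rw [hfin, Complex.conj_conj]
  exact this.symm


end HodgeAlgebraData

end Aux

/-- Assume the center `K := Z(H)` of `H` is a field and `t` does not fix `K`
pointwise, and let `K⁺ := {a ∈ K : t(a) = a}`. Then `K` is a quadratic extension of `K⁺`
(there is `x ∈ K \ K⁺` with `K = K⁺ + K⁺x`), and every (`ℚ`-algebra) homomorphism
`φ : K → ℂ` has image not contained in `ℝ` and satisfies `φ(t(a)) = conj(φ(a))` for all
`a ∈ K`; equivalently, for every embedding of `K⁺` into `ℝ`, the induced `ℝ`-algebra
`K ⊗_{K⁺} ℝ` is isomorphic to `ℂ`. -/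
theorem center_CM_of_t_nontrivial (D : HodgeAlgebraData H)
    (hK : IsField (Subring.center H))
    (hnf : ∃ a ∈ Subring.center H, D.t a ≠ a) :
    (∃ x ∈ Subring.center H, D.t x ≠ x ∧
      ∀ a ∈ Subring.center H, ∃ b c : H,
        (b ∈ Subring.center H ∧ D.t b = b) ∧ (c ∈ Subring.center H ∧ D.t c = c) ∧
        a = b + c * x) ∧
    (∀ φ : Subring.center H →+* ℂ,
      (∃ x : Subring.center H, (φ x).im ≠ 0) ∧
      (∀ (a : Subring.center H) (hta : D.t (a : H) ∈ Subring.center H),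
        φ ⟨D.t (a : H), hta⟩ = starRingEnd ℂ (φ a))) := by
  refine ⟨D.quadratic_part hK hnf, ?_⟩
  intro φ
  have key := D.conj_key hK φ
  refine ⟨?_, key⟩
  by_contra hno
  push_neg at hno
  obtain ⟨a₀, hmem, hne⟩ := hnf
  have hta : D.t ((⟨a₀, hmem⟩ : Subring.center H) : H) ∈ Subring.center H :=
    D.t_mem_center hmem
  have h1 := key ⟨a₀, hmem⟩ hta
  have h2 : starRingEnd ℂ (φ ⟨a₀, hmem⟩) = φ ⟨a₀, hmem⟩ :=
    Complex.conj_eq_iff_im.mpr (hno _)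
  rw [h2] at h1
  letI : Field ↥(Subring.center H) := hK.toField
  have hinj : Function.Injective φ := φ.injective
  have h3 := hinj h1
  exact hne (congrArg Subtype.val h3)
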